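/- Let k be a field and let n ≥ 1 with (n−1)! ≠ 0 in k. If f : Fin m → Polynomial k is a family of polynomials, each of degree < n, that is linearly independent over k, then the Wronskian Wr(f) is not the zero polynomial. -/

import Mathlib

open Polynomial

/-- The Wronskian of a family `f : Fin m → Polynomial k`. -/
noncomputable def Wr {k : Type*} [Field k] {m : ℕ} (f : Fin m → Polynomial k) : Polynomial k :=
  Matrix.det (Matrix.of fun i j : Fin m => Polynomial.derivative^[(i : ℕ)] (f j))

/-- Coefficient of a product at the sum of (bounds on) degrees. -/
lemma coeff_prod_of_natDegree_le' {R : Type*} [CommSemiring R] {ι : Type*} (s : Finset ι)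
    (f : ι → Polynomial R) (d : ι → ℕ) (h : ∀ i ∈ s, (f i).natDegree ≤ d i) :
    (∏ i ∈ s, f i).coeff (∑ i ∈ s, d i) = ∏ i ∈ s, (f i).coeff (d i) := by
  induction s using Finset.cons_induction with
  | empty => simp
  | cons a s ha ih =>
    rw [Finset.prod_cons, Finset.sum_cons, Finset.prod_cons,
      coeff_mul_add_eq_of_natDegree_le (h a (Finset.mem_cons_self a s))
        ((natDegree_prod_le s f).trans (Finset.sum_le_sum fun i hi =>
          h i (Finset.mem_cons_of_mem hi))),
      ih fun i hi => h i (Finset.mem_cons_of_mem hi)]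

lemma Wr_mul_matrix {k : Type*} [Field k] {m : ℕ} (f : Fin m → Polynomial k)
    (A : Matrix (Fin m) (Fin m) k) :
    Wr (fun j => ∑ l, A l j • f l) = Wr f * Polynomial.C A.det := by
  unfold Wr
  have hM : (Matrix.of fun i j : Fin m => Polynomial.derivative^[(i : ℕ)] (∑ l, A l j • f l))
      = (Matrix.of fun i j : Fin m => Polynomial.derivative^[(i : ℕ)] (f j)) *
        A.map Polynomial.C := by
    refine Matrix.ext fun i j => ?_
    simp only [Matrix.of_apply, Matrix.mul_apply, Matrix.map_apply]
    rw [Polynomial.iterate_derivative_sum]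
    refine Finset.sum_congr rfl fun l _ => ?_
    rw [Polynomial.iterate_derivative_smul, Polynomial.smul_eq_C_mul, mul_comm]
  rw [hM, Matrix.det_mul, ← Polynomial.C.mapMatrix_apply, ← RingHom.map_det]

lemma descFactorial_cast_eq_prod {k : Type*} [Field k] (x i : ℕ) :
    ((x.descFactorial i : ℕ) : k) = ∏ t ∈ Finset.range i, ((x : k) - t) := by
  rcases le_or_gt i x with h | h
  · rw [Nat.descFactorial_eq_prod_range, Nat.cast_prod]
    refine Finset.prod_congr rfl fun t ht => ?_
    rw [Nat.cast_sub (le_of_lt (lt_of_lt_of_le (Finset.mem_range.mp ht) h))]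
  · rw [Nat.descFactorial_eq_zero_iff_lt.mpr h, Nat.cast_zero]
    refine (Finset.prod_eq_zero (Finset.mem_range.mpr h) ?_).symm
    simp

lemma wr_ne_zero_of_strictMono {k : Type*} [Field k] (n : ℕ)
    (hfac : ((Nat.factorial (n - 1) : k) ≠ 0)) {m : ℕ} (g : Fin m → Polynomial k)
    (h0 : ∀ j, g j ≠ 0) (hd : StrictMono fun j => (g j).natDegree)
    (hlt : ∀ j, (g j).natDegree ≤ n - 1) : Wr g ≠ 0 := by
  classical
  set d : Fin m → ℕ := fun j => (g j).natDegree with hdd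
  set M : Matrix (Fin m) (Fin m) (Polynomial k) :=
    Matrix.of fun i j : Fin m => X ^ (i : ℕ) * Polynomial.derivative^[(i : ℕ)] (g j) with hMdef
  have hMdet : M.det = (∏ i : Fin m, (X : Polynomial k) ^ (i : ℕ)) * Wr g := by
    have : M = Matrix.diagonal (fun i : Fin m => (X : Polynomial k) ^ (i : ℕ)) *
        Matrix.of fun i j : Fin m => Polynomial.derivative^[(i : ℕ)] (g j) := by
      ext i j
      simp [hMdef, Matrix.diagonal_mul]
    rw [this, Matrix.det_mul, Matrix.det_diagonal]
    rfl
  -- entry degree bound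
  have hdeg : ∀ i j : Fin m, (M i j).natDegree ≤ d j := by
    intro i j
    rcases le_or_gt (i : ℕ) (d j) with h | h
    · refine (natDegree_mul_le).trans ?_
      have h1 : ((X : Polynomial k) ^ (i : ℕ)).natDegree ≤ (i : ℕ) := natDegree_X_pow_le _
      have h2 := Polynomial.natDegree_iterate_derivative (g j) (i : ℕ)
      have hdj : d j = (g j).natDegree := rfl
      exact (add_le_add h1 h2).trans (by omega)
    · rw [show M i j = X ^ (i : ℕ) * Polynomial.derivative^[(i : ℕ)] (g j) from rfl,
        Polynomial.iterate_derivative_eq_zero h, mul_zero]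
      simp
  -- top coefficient of each entry
  have hcoeff : ∀ i j : Fin m, (M i j).coeff (d j) =
      ((d j).descFactorial (i : ℕ) : k) * (g j).leadingCoeff := by
    intro i j
    rcases le_or_gt (i : ℕ) (d j) with h | h
    · have hdj : d j = (g j).natDegree := rfl
      have : d j = (d j - (i : ℕ)) + (i : ℕ) := by omega
      rw [show M i j = X ^ (i : ℕ) * Polynomial.derivative^[(i : ℕ)] (g j) from rfl, this,
        Polynomial.coeff_X_pow_mul, Polynomial.coeff_iterate_derivative]
      rw [show d j - (i : ℕ) + (i : ℕ) = d j from by omega]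
      rw [nsmul_eq_mul, Polynomial.leadingCoeff]
    · rw [show M i j = X ^ (i : ℕ) * Polynomial.derivative^[(i : ℕ)] (g j) from rfl,
        Polynomial.iterate_derivative_eq_zero h, mul_zero, Polynomial.coeff_zero,
        Nat.descFactorial_eq_zero_iff_lt.mpr h]
      simp
  set N : Matrix (Fin m) (Fin m) k :=
    Matrix.of fun i j : Fin m => ((d j).descFactorial (i : ℕ) : k) * (g j).leadingCoeff with hNdef
  have hkey : M.det.coeff (∑ j, d j) = N.det := by
    rw [Matrix.det_apply, Matrix.det_apply, Polynomial.finset_sum_coeff]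
    refine Finset.sum_congr rfl fun σ _ => ?_
    rw [Polynomial.coeff_smul]
    congr 1
    rw [coeff_prod_of_natDegree_le' _ _ _ fun i _ => hdeg (σ i) i]
    exact Finset.prod_congr rfl fun i _ => hcoeff (σ i) i
  have hN : N.det ≠ 0 := by
    have hfactor : N = (Matrix.of fun i j : Fin m => ((d j).descFactorial (i : ℕ) : k)) *
        Matrix.diagonal (fun j => (g j).leadingCoeff) := by
      ext i j
      simp [hNdef, Matrix.mul_diagonal]
    rw [hfactor, Matrix.det_mul, Matrix.det_diagonal]
    have hB : (Matrix.of fun i j : Fin m => ((d j).descFactorial (i : ℕ) : k)).det =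
        (Matrix.vandermonde fun j : Fin m => ((d j : ℕ) : k)).det := by
      rw [Matrix.det_eval_matrixOfPolynomials_eq_det_vandermonde
        (fun j : Fin m => ((d j : ℕ) : k))
        (fun i : Fin m => ∏ t ∈ Finset.range (i : ℕ), (X - Polynomial.C (t : k)))
        (fun i => ?_) (fun i => monic_prod_of_monic _ _ fun t _ => monic_X_sub_C _)]
      · rw [← Matrix.det_transpose]
        congr 1
        ext i j
        simp only [Matrix.transpose_apply, Matrix.of_apply]
        rw [descFactorial_cast_eq_prod, Polynomial.eval_prod]
        exact Finset.prod_congr rfl fun t _ => by simp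
      · rw [Polynomial.natDegree_prod _ _ fun t _ => Polynomial.X_sub_C_ne_zero _]
        simp only [Polynomial.natDegree_X_sub_C]
        simp
    rw [hB, Matrix.det_vandermonde]
    refine mul_ne_zero (Finset.prod_ne_zero_iff.mpr fun i _ =>
      Finset.prod_ne_zero_iff.mpr fun j hj => ?_)
      (Finset.prod_ne_zero_iff.mpr fun j _ => Polynomial.leadingCoeff_ne_zero.mpr (h0 j))
    have hij : i < j := Finset.mem_Ioi.mp hj
    have hdij : d i < d j := hd hij
    rw [← Nat.cast_sub (le_of_lt hdij)]
    intro hzero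
    set e := d j - d i with he
    have hdj2 : d j = (g j).natDegree := rfl
    have he1 : 1 ≤ e := by omega
    have he2 : e ≤ n - 1 := le_trans (by omega) (hlt j)
    have hdvd : e ∣ Nat.factorial (n - 1) := Nat.dvd_factorial (by omega) he2
    obtain ⟨c, hc⟩ := hdvd
    apply hfac
    rw [hc, Nat.cast_mul, hzero, zero_mul]
  intro hWr
  rw [hWr, mul_zero] at hMdet
  rw [hMdet] at hkey
  simp only [Polynomial.coeff_zero] at hkey
  exact hN hkey.symm

lemma exists_echelon {k : Type*} [Field k] : ∀ {m : ℕ} (f : Fin m → Polynomial k),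
    LinearIndependent k f →
    ∃ g : Fin m → Polynomial k, (∀ j, g j ∈ Submodule.span k (Set.range f)) ∧
      (∀ j, g j ≠ 0) ∧ StrictMono (fun j => (g j).natDegree) := by
  intro m
  induction m with
  | zero =>
    intro f _
    exact ⟨f, fun j => j.elim0, fun j => j.elim0, fun a => a.elim0⟩
  | succ m ih =>
    intro f hli
    classical
    obtain ⟨j0, hj0⟩ := Finite.exists_max fun j => (f j).natDegree
    set d : ℕ := (f j0).natDegree with hd
    have hfne : ∀ j, f j ≠ 0 := fun j => hli.ne_zero j
    have hlc : (f j0).coeff d ≠ 0 := by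
      rw [hd, ← Polynomial.leadingCoeff]
      exact Polynomial.leadingCoeff_ne_zero.mpr (hfne j0)
    set r : Fin m → k := fun j => (f (j0.succAbove j)).coeff d / (f j0).coeff d with hr
    set f' : Fin m → Polynomial k :=
      fun j => f (j0.succAbove j) - Polynomial.C (r j) * f j0 with hf'
    have hf'span : ∀ j, f' j ∈ Submodule.span k (Set.range f) := by
      intro j
      refine Submodule.sub_mem _ (Submodule.subset_span ⟨_, rfl⟩) ?_
      rw [← Polynomial.smul_eq_C_mul]
      exact Submodule.smul_mem _ _ (Submodule.subset_span ⟨_, rfl⟩)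
    have hf'deg : ∀ j, (f' j).degree < (d : ℕ∞) := by
      intro j
      have hnd : (f' j).natDegree ≤ d := by
        refine le_trans (Polynomial.natDegree_sub_le _ _) (max_le (hj0 _) ?_)
        exact le_trans (Polynomial.natDegree_C_mul_le _ _) (hj0 _)
      have hcd : (f' j).coeff d = 0 := by
        rw [hf']
        simp only [Polynomial.coeff_sub, Polynomial.coeff_C_mul]
        rw [hr]
        field_simp
        simp
      rcases eq_or_ne (f' j) 0 with h | h
      · rw [h, Polynomial.degree_zero]
        exact WithBot.bot_lt_coe d
      · refine lt_of_le_of_ne (Polynomial.natDegree_le_iff_degree_le.mp hnd) ?_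
        intro hdeg
        have : (f' j).coeff d = (f' j).leadingCoeff := by
          rw [Polynomial.leadingCoeff, Polynomial.natDegree_eq_of_degree_eq_some hdeg]
        rw [hcd] at this
        exact Polynomial.leadingCoeff_ne_zero.mpr h this.symm
    have hli' : LinearIndependent k f' := by
      rw [Fintype.linearIndependent_iff] at hli ⊢
      intro c hc
      set c' : Fin (m + 1) → k := j0.insertNth (-∑ j, c j * r j) c with hc'
      have hsum : ∑ i, c' i • f i = 0 := by
        rw [Fin.sum_univ_succAbove _ j0]
        simp only [hc', Fin.insertNth_apply_same, Fin.insertNth_apply_succAbove]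
        have : ∑ j : Fin m, c j • f (j0.succAbove j)
            = (∑ j, c j * r j) • f j0 := by
          have := hc
          simp only [hf', smul_sub] at this
          rw [Finset.sum_sub_distrib, sub_eq_zero] at this
          rw [this, Finset.sum_smul]
          refine Finset.sum_congr rfl fun j _ => ?_
          rw [← Polynomial.smul_eq_C_mul, smul_smul]
        rw [this, neg_smul, neg_add_cancel]
      intro j
      have := hli c' hsum (j0.succAbove j)
      rwa [hc', Fin.insertNth_apply_succAbove] at this
    obtain ⟨g', hg'span, hg'ne, hg'mono⟩ := ih f' hli'
    have hg'deg : ∀ j, (g' j).degree < (d : ℕ∞) := by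
      intro j
      have : g' j ∈ Polynomial.degreeLT k d := by
        refine Submodule.span_le.mpr ?_ (hg'span j)
        rintro _ ⟨i, rfl⟩
        exact Polynomial.mem_degreeLT.mpr (hf'deg i)
      exact Polynomial.mem_degreeLT.mp this
    have hg'nd : ∀ j, (g' j).natDegree < d := fun j =>
      (Polynomial.natDegree_lt_iff_degree_lt (hg'ne j)).mpr (hg'deg j)
    refine ⟨Fin.snoc g' (f j0), ?_, ?_, ?_⟩
    · intro j
      refine Fin.lastCases ?_ (fun i => ?_) j
      · rw [Fin.snoc_last]
        exact Submodule.subset_span ⟨_, rfl⟩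
      · rw [Fin.snoc_castSucc]
        refine Submodule.span_le.mpr ?_ (hg'span i)
        rintro _ ⟨l, rfl⟩
        exact hf'span l
    · intro j
      refine Fin.lastCases ?_ (fun i => ?_) j
      · rw [Fin.snoc_last]; exact hfne j0
      · rw [Fin.snoc_castSucc]; exact hg'ne i
    · intro a b hab
      rcases Fin.eq_castSucc_or_eq_last b with ⟨b', rfl⟩ | rfl
      · obtain ⟨a', rfl⟩ := Fin.eq_castSucc_of_ne_last
          (ne_of_lt (lt_of_lt_of_le hab (Fin.le_last _)))
        simp only [Fin.snoc_castSucc]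
        exact hg'mono (Fin.castSucc_lt_castSucc_iff.mp hab)
      · obtain ⟨a', rfl⟩ := Fin.eq_castSucc_of_ne_last (ne_of_lt hab)
        simp only [Fin.snoc_castSucc, Fin.snoc_last]
        exact hg'nd a'

theorem wronskian_ne_zero_of_linearIndependent {k : Type*} [Field k] (n : ℕ) (hn : 1 ≤ n)
    (hfac : ((Nat.factorial (n - 1) : k) ≠ 0)) {m : ℕ}
    (f : Fin m → Polynomial k) (hf : ∀ i, (f i).degree < n)
    (hli : LinearIndependent k f) :
    Wr f ≠ 0 := by
  classical
  obtain ⟨g, hgspan, hgne, hgmono⟩ := exists_echelon f hli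
  have hgdeg : ∀ j, (g j).natDegree ≤ n - 1 := by
    intro j
    have hmem : g j ∈ Polynomial.degreeLT k n := by
      refine Submodule.span_le.mpr ?_ (hgspan j)
      rintro _ ⟨i, rfl⟩
      exact Polynomial.mem_degreeLT.mpr (hf i)
    have := Polynomial.mem_degreeLT.mp hmem
    have hnd : (g j).natDegree < n :=
      (Polynomial.natDegree_lt_iff_degree_lt (hgne j)).mpr this
    omega
  have hA : ∀ j, ∃ c : Fin m → k, ∑ l, c l • f l = g j := by
    intro j
    exact (Submodule.mem_span_range_iff_exists_fun k).mp (hgspan j)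
  set A : Matrix (Fin m) (Fin m) k := Matrix.of fun l j => (hA j).choose l with hAdef
  have hg : g = fun j => ∑ l, A l j • f l := by
    funext j
    exact ((hA j).choose_spec).symm
  have hWrg : Wr g ≠ 0 := wr_ne_zero_of_strictMono n hfac g hgne hgmono hgdeg
  rw [hg, Wr_mul_matrix] at hWrg
  exact fun h => hWrg (by rw [h, zero_mul])
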